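/- Let R ⊆ S_n be a top-k partial ranking, let λ > 0, let H be a real inner product space, and let φ : S_n → H satisfy ⟨φ(σ), φ(σ')⟩ = exp(−λ d(σ, σ')) for all σ, σ' ∈ S_n, where d is the Kendall distance. Let μ = (1/|R|) Σ_{σ ∈ R} φ(σ) be the mean embedding of the uniform distribution on R. Then for every σ_1 ∈ R, the antithetic permutation A_R(σ_1) is the unique minimizer over σ_2 ∈ R of the herding objective ‖μ − (1/2)(φ(σ_1) + φ(σ_2))‖²; i.e. the optimal second herding sample given first sample σ_1 is exactly the antithetic permutation A_R(σ_1). -/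

import Mathlib

/-- The Kendall (tau) distance between two permutations of `Fin n`:
the number of pairs `(x, y)` with `x < y` on which `σ⁻¹` and `τ⁻¹`
disagree in relative order. -/
def kendallDist {n : ℕ} (σ τ : Equiv.Perm (Fin n)) : ℕ :=
  (Finset.univ.filter (fun p : Fin n × Fin n =>
    p.1 < p.2 ∧ ¬((σ⁻¹ p.1 < σ⁻¹ p.2) ↔ (τ⁻¹ p.1 < τ⁻¹ p.2)))).card

/-- The top-`k` partial ranking determined by the items `a 0, …, a (k-1)`:
the set of full rankings (permutations) `σ` with `σ i = a i` for the first
`k` positions. -/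
def topkFinset {n k : ℕ} (hk : k ≤ n) (a : Fin k → Fin n) :
    Finset (Equiv.Perm (Fin n)) :=
  Finset.univ.filter fun σ => ∀ i : Fin k, σ (Fin.castLE hk i) = a i

/-- The permutation of `Fin n` fixing the first `k` positions and reversing
the order of the remaining `n - k` positions. -/
def revAfter (n k : ℕ) : Equiv.Perm (Fin n) :=
  Function.Involutive.toPerm
    (fun p => if _h : (p : ℕ) < k then p
      else ⟨n + k - 1 - (p : ℕ), by have := p.isLt; omega⟩)
    (by
      intro p
      have hp := p.isLt
      by_cases h : (p : ℕ) < k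
      · simp [h]
      · have h2 : ¬ (n + k - 1 - (p : ℕ) < k) := by omega
        simp only [dif_neg h, dif_neg h2]
        ext
        simp
        omega)

/-- The antithetic permutation of `σ` relative to a top-`k` partial ranking:
the first `k` positions are unchanged and the remaining positions are
reversed, i.e. `A σ (k+j) = σ (n+1-j)` (in 1-indexed notation). -/
def antithetic (n k : ℕ) (σ : Equiv.Perm (Fin n)) : Equiv.Perm (Fin n) :=
  σ * revAfter n k

open Finset

def invCount {n : ℕ} (π : Equiv.Perm (Fin n)) : ℕ :=
  (Finset.univ.filter (fun p : Fin n × Fin n => p.1 < p.2 ∧ π p.2 < π p.1)).card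

lemma kendall_eq_inv {n : ℕ} (σ τ : Equiv.Perm (Fin n)) :
    kendallDist σ τ = invCount (τ⁻¹ * σ) := by
  classical
  apply Finset.card_nbij'
    (i := fun p => if σ⁻¹ p.1 < σ⁻¹ p.2 then (σ⁻¹ p.1, σ⁻¹ p.2) else (σ⁻¹ p.2, σ⁻¹ p.1))
    (j := fun q => if σ q.1 < σ q.2 then (σ q.1, σ q.2) else (σ q.2, σ q.1))
  · rintro ⟨x, y⟩ hm
    simp only [mem_coe, mem_filter, mem_univ, true_and] at hm ⊢
    obtain ⟨hxy, hD⟩ := hm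
    have hne : σ⁻¹ x ≠ σ⁻¹ y := fun h => absurd (σ⁻¹.injective h) (ne_of_lt hxy)
    have hτne : τ⁻¹ x ≠ τ⁻¹ y := fun h => absurd (τ⁻¹.injective h) (ne_of_lt hxy)
    by_cases h : σ⁻¹ x < σ⁻¹ y
    · have h2 : ¬ τ⁻¹ x < τ⁻¹ y := fun h2 => hD ⟨fun _ => h2, fun _ => h⟩
      have h3 : τ⁻¹ y < τ⁻¹ x := (hτne.symm).lt_of_le (not_lt.mp h2)
      simp only [Equiv.Perm.coe_inv] at *
      simp [h, Equiv.Perm.mul_apply, h3]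
    · have h1 : σ⁻¹ y < σ⁻¹ x := (hne.symm).lt_of_le (not_lt.mp h)
      have h2 : τ⁻¹ x < τ⁻¹ y := by
        by_contra h2
        exact hD ⟨fun h3 => absurd h3 h, fun h3 => absurd h3 h2⟩
      simp only [Equiv.Perm.coe_inv] at *
      simp [h, h1, Equiv.Perm.mul_apply, h2]
  · rintro ⟨u, v⟩ hm
    simp only [invCount, mem_coe, mem_filter, mem_univ, true_and] at hm ⊢
    simp only [Equiv.Perm.mul_apply] at hm ⊢
    obtain ⟨huv, hπ⟩ := hm
    have hne : σ u ≠ σ v := fun h => absurd (σ.injective h) (ne_of_lt huv)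
    by_cases h : σ u < σ v
    · simp only [if_pos h]
      refine ⟨h, fun hI => ?_⟩
      simp only [Equiv.Perm.coe_inv, Equiv.symm_apply_apply] at hI
      exact absurd (hI.mp huv) (not_lt.mpr (le_of_lt hπ))
    · have h1 : σ v < σ u := (hne.symm).lt_of_le (not_lt.mp h)
      simp only [if_neg h]
      refine ⟨h1, fun hI => ?_⟩
      simp only [Equiv.Perm.coe_inv, Equiv.symm_apply_apply] at hI
      exact absurd (hI.mpr hπ) (not_lt.mpr (le_of_lt huv))
  · rintro ⟨x, y⟩ hm
    simp only [mem_coe, mem_filter, mem_univ, true_and] at hm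
    obtain ⟨hxy, _⟩ := hm
    by_cases h : σ⁻¹ x < σ⁻¹ y
    · simp only [Equiv.Perm.coe_inv] at *
      simp [h, hxy]
    · have hne : σ⁻¹ x ≠ σ⁻¹ y := fun h2 => absurd (σ⁻¹.injective h2) (ne_of_lt hxy)
      have h1 : σ⁻¹ y < σ⁻¹ x := (hne.symm).lt_of_le (not_lt.mp h)
      simp only [Equiv.Perm.coe_inv] at *
      simp [h, hxy, not_lt.mpr (le_of_lt hxy)]
  · rintro ⟨u, v⟩ hm
    simp only [invCount, mem_coe, mem_filter, mem_univ, true_and] at hm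
    obtain ⟨huv, _⟩ := hm
    by_cases h : σ u < σ v
    · simp [h, huv]
    · have hne : σ u ≠ σ v := fun h2 => absurd (σ.injective h2) (ne_of_lt huv)
      have h1 : σ v < σ u := (hne.symm).lt_of_le (not_lt.mp h)
      simp [h, huv, not_lt.mpr (le_of_lt huv)]

lemma revAfter_apply {n k : ℕ} (p : Fin n) :
    revAfter n k p = if _h : (p : ℕ) < k then p
      else ⟨n + k - 1 - (p : ℕ), by have := p.isLt; omega⟩ := rfl

lemma revAfter_involutive (n k : ℕ) : Function.Involutive (revAfter n k) :=
  Function.Involutive.toPerm_involutive _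

lemma revAfter_inv (n k : ℕ) : (revAfter n k)⁻¹ = revAfter n k :=
  Equiv.Perm.inv_def (revAfter n k) ▸ Function.Involutive.toPerm_symm _

lemma revAfter_mul_self (n k : ℕ) : revAfter n k * revAfter n k = 1 := by
  ext x
  simp [Equiv.Perm.mul_apply, revAfter_involutive n k x]

-- a permutation fixing positions < k maps the block [k, n) to itself
lemma block_maps {n k : ℕ} (π : Equiv.Perm (Fin n))
    (hfix : ∀ j : Fin n, (j : ℕ) < k → π j = j) (x : Fin n) (hx : k ≤ (x : ℕ)) :
    k ≤ ((π x : Fin n) : ℕ) := by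
  by_contra h
  push_neg at h
  have := hfix (π x) h
  have := π.injective this
  omega

lemma inv_subset {n k : ℕ} (π : Equiv.Perm (Fin n))
    (hfix : ∀ j : Fin n, (j : ℕ) < k → π j = j) :
    (Finset.univ.filter (fun p : Fin n × Fin n => p.1 < p.2 ∧ π p.2 < π p.1)) ⊆
    (Finset.univ.filter (fun p : Fin n × Fin n => p.1 < p.2 ∧ k ≤ (p.1 : ℕ))) := by
  rintro ⟨u, v⟩ hm
  simp only [mem_filter, mem_univ, true_and] at hm ⊢
  obtain ⟨huv, hπ⟩ := hm
  refine ⟨huv, ?_⟩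
  by_contra h
  push_neg at h
  rw [hfix u h] at hπ
  by_cases h2 : (v : ℕ) < k
  · rw [hfix v h2] at hπ
    exact absurd huv (not_lt.mpr (le_of_lt hπ))
  · have := block_maps π hfix v (le_of_not_gt h2)
    have : (u : ℕ) < ((π v : Fin n) : ℕ) := lt_of_lt_of_le h this
    exact absurd hπ (not_lt.mpr (le_of_lt (by exact_mod_cast this)))

lemma inv_revAfter_set {n k : ℕ} (hk : k ≤ n) :
    (Finset.univ.filter (fun p : Fin n × Fin n => p.1 < p.2 ∧ revAfter n k p.2 < revAfter n k p.1)) =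
    (Finset.univ.filter (fun p : Fin n × Fin n => p.1 < p.2 ∧ k ≤ (p.1 : ℕ))) := by
  apply Finset.Subset.antisymm
  · exact inv_subset _ (fun j hj => by simp [revAfter_apply, hj])
  · rintro ⟨u, v⟩ hm
    simp only [mem_filter, mem_univ, true_and] at hm ⊢
    obtain ⟨huv, hu⟩ := hm
    have hv : k ≤ (v : ℕ) := le_trans hu (le_of_lt huv)
    refine ⟨huv, ?_⟩
    have h1 : ¬ ((u:ℕ) < k) := not_lt.mpr hu
    have h2 : ¬ ((v:ℕ) < k) := not_lt.mpr hv
    simp only [revAfter_apply, dif_neg h1, dif_neg h2]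
    have hvn := v.isLt
    exact Fin.mk_lt_mk.mpr (by omega)

lemma strictMono_perm_eq_one {n : ℕ} (g : Equiv.Perm (Fin n)) (hg : StrictMono ⇑g) :
    g = 1 := by
  haveI : WellFoundedLT (Fin n) := Finite.to_wellFoundedLT
  have h2 : StrictMono ⇑g⁻¹ := by
    intro x y hxy
    rcases lt_trichotomy (g⁻¹ x) (g⁻¹ y) with h | h | h
    · exact h
    · exact absurd (g⁻¹.injective (Fin.ext (congrArg Fin.val h))) (ne_of_lt hxy)
    · have := hg h
      simp only [Equiv.Perm.coe_inv, Equiv.apply_symm_apply] at this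
      exact absurd this (not_lt.mpr (le_of_lt hxy))
  ext x
  have h1 : x ≤ g x := hg.le_apply
  have h3 : g x ≤ g⁻¹ (g x) := h2.le_apply
  simp only [Equiv.Perm.coe_inv, Equiv.symm_apply_apply] at h3
  simp [le_antisymm h3 h1]

lemma eq_revAfter {n k : ℕ} (π : Equiv.Perm (Fin n))
    (hfix : ∀ j : Fin n, (j : ℕ) < k → π j = j)
    (hdec : ∀ u v : Fin n, u < v → k ≤ (u : ℕ) → π v < π u) :
    π = revAfter n k := by
  have key : π * revAfter n k = 1 := by
    apply strictMono_perm_eq_one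
    intro x y hxy
    simp only [Equiv.Perm.mul_apply]
    have hxy' : (x : ℕ) < (y : ℕ) := hxy
    by_cases hy : (y : ℕ) < k
    · have hx : (x : ℕ) < k := lt_trans hxy' hy
      rw [revAfter_apply, revAfter_apply, dif_pos hx, dif_pos hy, hfix x hx, hfix y hy]
      exact hxy
    · have hvy := y.isLt
      have hry : k ≤ ((revAfter n k y : Fin n) : ℕ) := by
        rw [revAfter_apply, dif_neg hy]
        simp only [Fin.val_mk]
        omega
      by_cases hx : (x : ℕ) < k
      · rw [revAfter_apply (k := k) x, dif_pos hx, hfix x hx]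
        have := block_maps π hfix _ hry
        exact Fin.lt_def.mpr (lt_of_lt_of_le hx this)
      · have hvx := x.isLt
        have hry2 : revAfter n k y < revAfter n k x := by
          rw [revAfter_apply, revAfter_apply, dif_neg hx, dif_neg hy]
          exact Fin.mk_lt_mk.mpr (by omega)
        exact hdec _ _ hry2 hry
  have h2 : π = (revAfter n k)⁻¹ := eq_inv_of_mul_eq_one_left key
  rw [h2, revAfter_inv]

lemma invCount_le_rev {n k : ℕ} (π : Equiv.Perm (Fin n))
    (hfix : ∀ j : Fin n, (j : ℕ) < k → π j = j) (hk : k ≤ n) :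
    invCount π ≤ invCount (revAfter n k) := by
  rw [invCount, invCount, inv_revAfter_set hk]
  exact Finset.card_le_card (inv_subset π hfix)

lemma invCount_lt_rev {n k : ℕ} (π : Equiv.Perm (Fin n))
    (hfix : ∀ j : Fin n, (j : ℕ) < k → π j = j) (hk : k ≤ n)
    (hne : π ≠ revAfter n k) :
    invCount π < invCount (revAfter n k) := by
  rw [invCount, invCount, inv_revAfter_set hk]
  apply Finset.card_lt_card
  refine ⟨inv_subset π hfix, fun hsub => hne (eq_revAfter π hfix ?_)⟩
  intro u v huv hu
  have : (u, v) ∈ Finset.univ.filter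
      (fun p : Fin n × Fin n => p.1 < p.2 ∧ k ≤ (p.1 : ℕ)) := by
    simp [huv, hu]
  have := hsub this
  simp only [mem_filter, mem_univ, true_and] at this
  exact this.2

lemma mem_topk {n k : ℕ} {hk : k ≤ n} {a : Fin k → Fin n} {σ : Equiv.Perm (Fin n)} :
    σ ∈ topkFinset hk a ↔ ∀ i : Fin k, σ (Fin.castLE hk i) = a i := by
  simp [topkFinset]

lemma kendall_left_invariant {n : ℕ} (ρ σ τ : Equiv.Perm (Fin n)) :
    kendallDist (ρ * σ) (ρ * τ) = kendallDist σ τ := by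
  rw [kendall_eq_inv, kendall_eq_inv]
  congr 1
  group

lemma fix_of_mem {n k : ℕ} {hk : k ≤ n} {a : Fin k → Fin n}
    {σ₁ σ₂ : Equiv.Perm (Fin n)} (h1 : σ₁ ∈ topkFinset hk a)
    (h2 : σ₂ ∈ topkFinset hk a) :
    ∀ j : Fin n, (j : ℕ) < k → (σ₂⁻¹ * σ₁) j = j := by
  intro j hj
  rw [mem_topk] at h1 h2
  have hj' : j = Fin.castLE hk ⟨(j : ℕ), hj⟩ := by ext; simp
  rw [hj', Equiv.Perm.mul_apply, h1 ⟨(j : ℕ), hj⟩, ← h2 ⟨(j : ℕ), hj⟩,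
    Equiv.Perm.coe_inv, Equiv.symm_apply_apply]

lemma mul_mem_topk {n k : ℕ} {hk : k ≤ n} {a : Fin k → Fin n}
    {σ σ₂ σ₂' : Equiv.Perm (Fin n)} (h : σ ∈ topkFinset hk a)
    (h2 : σ₂ ∈ topkFinset hk a) (h2' : σ₂' ∈ topkFinset hk a) :
    σ₂' * σ₂⁻¹ * σ ∈ topkFinset hk a := by
  rw [mem_topk] at *
  intro i
  simp only [Equiv.Perm.mul_apply, h i, ← h2 i, Equiv.Perm.coe_inv, Equiv.symm_apply_apply, h2' i]

lemma sum_kernel_const {n k : ℕ} {hk : k ≤ n} {a : Fin k → Fin n} (lam : ℝ)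
    {σ₂ σ₂' : Equiv.Perm (Fin n)} (h2 : σ₂ ∈ topkFinset hk a)
    (h2' : σ₂' ∈ topkFinset hk a) :
    ∑ σ ∈ topkFinset hk a, Real.exp (-lam * (kendallDist σ σ₂ : ℝ)) =
    ∑ σ ∈ topkFinset hk a, Real.exp (-lam * (kendallDist σ σ₂' : ℝ)) := by
  apply Finset.sum_nbij' (i := fun σ => σ₂' * σ₂⁻¹ * σ) (j := fun σ => σ₂ * σ₂'⁻¹ * σ)
  · intro σ hσ; exact mul_mem_topk hσ h2 h2'
  · intro σ hσ; exact mul_mem_topk hσ h2' h2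
  · intro σ _; group
  · intro σ _; group
  · intro σ _
    have h := kendall_left_invariant (σ₂' * σ₂⁻¹) σ σ₂
    rw [show σ₂' * σ₂⁻¹ * σ₂ = σ₂' by group] at h
    rw [h]

lemma kendall_symm {n : ℕ} (σ τ : Equiv.Perm (Fin n)) :
    kendallDist σ τ = kendallDist τ σ := by
  unfold kendallDist
  congr 1
  apply Finset.filter_congr
  intro p _
  constructor <;> exact fun h => ⟨h.1, fun hiff => h.2 hiff.symm⟩

lemma kendall_self {n : ℕ} (σ : Equiv.Perm (Fin n)) : kendallDist σ σ = 0 := by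
  simp [kendallDist]

/-- Antithetic sampling as optimal kernel herding: let `R` be a top-`k`
partial ranking, `λ > 0`, and let `φ : S_n → H` be a feature map for the
Mallows kernel, i.e. `⟨φ(σ), φ(σ')⟩ = exp(−λ d(σ, σ'))` with `d` the Kendall
distance. With `μ` the mean embedding of the uniform distribution on `R`, for
every first sample `σ₁ ∈ R` the antithetic permutation `A_R(σ₁)` lies in `R`
and is the unique minimizer over `σ₂ ∈ R` of the herding objective
`‖μ − (1/2)(φ(σ₁) + φ(σ₂))‖²`. -/
theorem antithetic_optimal_herding {n k : ℕ} (hk : k ≤ n)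
    (a : Fin k → Fin n) (ha : Function.Injective a)
    (lam : ℝ) (hlam : 0 < lam)
    {H : Type*} [NormedAddCommGroup H] [InnerProductSpace ℝ H]
    (φ : Equiv.Perm (Fin n) → H)
    (hφ : ∀ σ τ : Equiv.Perm (Fin n),
      (inner ℝ (φ σ) (φ τ) : ℝ) = Real.exp (-lam * (kendallDist σ τ : ℝ))) :
    ∀ σ₁ ∈ topkFinset hk a,
      let R := topkFinset hk a
      let μ : H := (R.card : ℝ)⁻¹ • ∑ σ ∈ R, φ σ
      antithetic n k σ₁ ∈ R ∧
      (∀ σ₂ ∈ R,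
        ‖μ - (1 / 2 : ℝ) • (φ σ₁ + φ (antithetic n k σ₁))‖ ^ 2 ≤
          ‖μ - (1 / 2 : ℝ) • (φ σ₁ + φ σ₂)‖ ^ 2) ∧
      (∀ σ₂ ∈ R, σ₂ ≠ antithetic n k σ₁ →
        ‖μ - (1 / 2 : ℝ) • (φ σ₁ + φ (antithetic n k σ₁))‖ ^ 2 <
          ‖μ - (1 / 2 : ℝ) • (φ σ₁ + φ σ₂)‖ ^ 2) := by
  intro σ₁ h1 R μ
  have hA : antithetic n k σ₁ ∈ R := by
    rw [mem_topk] at h1 ⊢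
    intro i
    have hlt : ((Fin.castLE hk i : Fin n) : ℕ) < k := by
      simpa using i.isLt
    show σ₁ (revAfter n k (Fin.castLE hk i)) = a i
    rw [revAfter_apply, dif_pos hlt, h1 i]
  have hinner : ∀ τ : Equiv.Perm (Fin n), (inner ℝ μ (φ τ) : ℝ)
      = (R.card : ℝ)⁻¹ * ∑ σ ∈ R, Real.exp (-lam * (kendallDist σ τ : ℝ)) := by
    intro τ
    show (inner ℝ ((R.card : ℝ)⁻¹ • ∑ σ ∈ R, φ σ) (φ τ) : ℝ) = _
    rw [real_inner_smul_left, sum_inner]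
    congr 1
    exact Finset.sum_congr rfl fun σ _ => hφ σ τ
  have hconst : ∀ τ ∈ R, (inner ℝ μ (φ τ) : ℝ) = (inner ℝ μ (φ σ₁) : ℝ) := by
    intro τ hτ
    rw [hinner, hinner, sum_kernel_const lam hτ h1]
  have hnormφ : ∀ σ : Equiv.Perm (Fin n), (inner ℝ (φ σ) (φ σ) : ℝ) = 1 := by
    intro σ
    rw [hφ, kendall_self]
    simp
  have hexp : ∀ σ₂ ∈ R, ‖μ - (1 / 2 : ℝ) • (φ σ₁ + φ σ₂)‖ ^ 2
      = ‖μ‖ ^ 2 - 2 * (inner ℝ μ (φ σ₁) : ℝ) + 1/2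
        + (1/2) * Real.exp (-lam * (kendallDist σ₁ σ₂ : ℝ)) := by
    intro σ₂ h2
    rw [norm_sub_sq_real]
    have e1 : (inner ℝ μ ((1 / 2 : ℝ) • (φ σ₁ + φ σ₂)) : ℝ)
        = (1/2) * ((inner ℝ μ (φ σ₁) : ℝ) + (inner ℝ μ (φ σ₂) : ℝ)) := by
      rw [real_inner_smul_right, inner_add_right]
    have e2 : ‖(1 / 2 : ℝ) • (φ σ₁ + φ σ₂)‖ ^ 2
        = 1/2 + (1/2) * Real.exp (-lam * (kendallDist σ₁ σ₂ : ℝ)) := by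
      rw [← real_inner_self_eq_norm_sq, real_inner_smul_left, real_inner_smul_right,
        inner_add_left, inner_add_right, inner_add_right, hnormφ, hnormφ,
        hφ σ₁ σ₂, hφ σ₂ σ₁, kendall_symm σ₂ σ₁]
      ring
    rw [e1, e2, hconst σ₂ h2]
    ring
  have hdA : kendallDist σ₁ (antithetic n k σ₁) = invCount (revAfter n k) := by
    rw [kendall_eq_inv]
    congr 1
    rw [antithetic, mul_inv_rev, revAfter_inv]
    simp [mul_assoc]
  have hd : ∀ σ₂, kendallDist σ₁ σ₂ = invCount (σ₂⁻¹ * σ₁) := fun σ₂ => kendall_eq_inv σ₁ σ₂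
  refine ⟨hA, ?_, ?_⟩
  · intro σ₂ h2
    rw [hexp σ₂ h2, hexp _ hA, hdA]
    have hle : invCount (σ₂⁻¹ * σ₁) ≤ invCount (revAfter n k) :=
      invCount_le_rev _ (fix_of_mem h1 h2) hk
    have : Real.exp (-lam * (invCount (revAfter n k) : ℝ))
        ≤ Real.exp (-lam * ((kendallDist σ₁ σ₂ : ℝ))) := by
      apply Real.exp_le_exp.mpr
      rw [hd σ₂]
      have : (invCount (σ₂⁻¹ * σ₁) : ℝ) ≤ (invCount (revAfter n k) : ℝ) := by
        exact_mod_cast hle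
      nlinarith
    linarith
  · intro σ₂ h2 hne
    rw [hexp σ₂ h2, hexp _ hA, hdA]
    have hne2 : σ₂⁻¹ * σ₁ ≠ revAfter n k := by
      intro heq
      apply hne
      have h3 : σ₂ * (σ₂⁻¹ * σ₁) = σ₁ := by group
      rw [heq] at h3
      rw [antithetic, ← h3, mul_assoc, revAfter_mul_self, mul_one]
    have hlt : invCount (σ₂⁻¹ * σ₁) < invCount (revAfter n k) :=
      invCount_lt_rev _ (fix_of_mem h1 h2) hk hne2
    have : Real.exp (-lam * (invCount (revAfter n k) : ℝ))
        < Real.exp (-lam * ((kendallDist σ₁ σ₂ : ℝ))) := by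
      apply Real.exp_lt_exp.mpr
      rw [hd σ₂]
      have : (invCount (σ₂⁻¹ * σ₁) : ℝ) < (invCount (revAfter n k) : ℝ) := by
        exact_mod_cast hlt
      nlinarith
    linarith
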